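/- For any metric d on a finite nonempty set A with |A| = n and any real Σ, the function σ(x,y) = d(x,·) + d(y,·) − d(x,y) − d(·,·) + Σ/n is a Σ-proximity on A, where d(x,·) = (1/n)∑_{t∈A} d(x,t) and d(·,·) = (1/n²)∑_{s,t∈A} d(s,t). -/

import Mathlib

open Finset

/-- A metric in the sense of the paper: `d x y = 0` iff `x = y`, and
the triangle inequality `d x y + d x z - d y z ≥ 0`. -/
def IsPaperMetric {A : Type*} (d : A → A → ℝ) : Prop :=
  (∀ x y, d x y = 0 ↔ x = y) ∧ (∀ x y z, 0 ≤ d x y + d x z - d y z)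

/-- A Σ-proximity on a finite set: normalization and the (σ-)triangle
inequality, strict when `z = y` and `x ≠ y`. -/
def IsSigmaProx {A : Type*} [Fintype A] (S : ℝ) (σ : A → A → ℝ) : Prop :=
  (∀ x, ∑ t, σ x t = S) ∧
  (∀ x y z, σ x y + σ x z - σ y z ≤ σ x x) ∧
  (∀ x y, x ≠ y → σ x y + σ x y - σ y y < σ x x)

/-- `d(x,·)`: the average distance from `x`. -/
noncomputable def dRow {A : Type*} [Fintype A] (d : A → A → ℝ) (x : A) : ℝ :=
  (∑ t, d x t) / (Fintype.card A : ℝ)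

/-- `d(·,·)`: the overall average distance. -/
noncomputable def dAvg {A : Type*} [Fintype A] (d : A → A → ℝ) : ℝ :=
  (∑ s, ∑ t, d s t) / (Fintype.card A : ℝ) ^ 2

/-- The transformation φ from metrics to Σ-proximities. -/
noncomputable def phi {A : Type*} [Fintype A] (S : ℝ) (d : A → A → ℝ) : A → A → ℝ :=
  fun x y => dRow d x + dRow d y - d x y - dAvg d + S / (Fintype.card A : ℝ)

/-- The transformation ψ from Σ-proximities to metrics. -/
noncomputable def psi {A : Type*} (σ : A → A → ℝ) : A → A → ℝ :=
  fun x y => (σ x x + σ y y) / 2 - σ x y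

theorem phi_isSigmaProx {A : Type*} [Fintype A] [Nonempty A] (S : ℝ)
    (d : A → A → ℝ) (hd : IsPaperMetric d) :
    IsSigmaProx S (phi S d) := by
  obtain ⟨h0, htri⟩ := hd
  have hn : (0 : ℝ) < (Fintype.card A : ℝ) := by
    exact_mod_cast Fintype.card_pos
  have hdxx : ∀ x, d x x = 0 := fun x => (h0 x x).mpr rfl
  have hpos : ∀ x y, x ≠ y → 0 < d x y := by
    intro x y hxy
    have h := htri x y y
    have h2 : d x y ≠ 0 := fun h' => hxy ((h0 x y).mp h')
    rw [hdxx] at h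
    cases lt_or_eq_of_le (by linarith : (0:ℝ) ≤ d x y) with
    | inl h => exact h
    | inr h => exact absurd h.symm h2
  refine ⟨?_, ?_, ?_⟩
  · intro x
    have hrow : ∑ t, dRow d t = (Fintype.card A : ℝ) * dAvg d := by
      unfold dRow dAvg
      rw [← Finset.sum_div]
      field_simp
    simp only [phi]
    rw [Finset.sum_add_distrib, Finset.sum_sub_distrib, Finset.sum_sub_distrib,
      Finset.sum_add_distrib, Finset.sum_const, Finset.sum_const, Finset.sum_const,
      Finset.card_univ, hrow]
    unfold dRow
    simp only [nsmul_eq_mul]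
    field_simp
    ring
  · intro x y z
    have h := htri x y z
    simp only [phi, hdxx]
    linarith
  · intro x y hxy
    have h := hpos x y hxy
    simp only [phi, hdxx]
    linarith
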